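/- arXiv:1311.3286 — 6 statements merged into one kernel-verified Lean document; each statement's English description precedes it below -/
import Mathlib

section
/- Let D be an n×n real diagonal matrix with strictly positive diagonal entries and let A be a symmetric n×n real matrix such that both D − A and D − A·D⁻¹·A are invertible. Then (D − A)⁻¹ = (1/2)·( D⁻¹ + (I + D⁻¹·A)·(D − A·D⁻¹·A)⁻¹·(I + A·D⁻¹) ). -/
open Matrix

/-- For an `n × n` real diagonal matrix `D` with strictly positive diagonal
entries and a symmetric `A` such that `D - A` and `D - A * D⁻¹ * A` are invertible,
`(D - A)⁻¹ = (1/2) • (D⁻¹ + (I + D⁻¹A) (D - A D⁻¹ A)⁻¹ (I + A D⁻¹))`. -/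
theorem stmt0 {n : ℕ} (d : Fin n → ℝ) (hd : ∀ i, 0 < d i)
    (D : Matrix (Fin n) (Fin n) ℝ) (hD : D = Matrix.diagonal d)
    (A : Matrix (Fin n) (Fin n) ℝ) (hA : A.IsSymm)
    (h1 : IsUnit (D - A).det)
    (h2 : IsUnit (D - A * D⁻¹ * A).det) :
    (D - A)⁻¹ =
      (1 / 2 : ℝ) • (D⁻¹ + (1 + D⁻¹ * A) * (D - A * D⁻¹ * A)⁻¹ * (1 + A * D⁻¹)) := by
  have hDdet : IsUnit D.det := by
    subst hD
    simp only [Matrix.det_diagonal]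
    exact isUnit_iff_ne_zero.mpr (ne_of_gt (Finset.prod_pos fun i _ => hd i))
  have hDD : D * D⁻¹ = 1 := Matrix.mul_nonsing_inv D hDdet
  have hM : (D - A * D⁻¹ * A) * (D - A * D⁻¹ * A)⁻¹ = 1 :=
    Matrix.mul_nonsing_inv _ h2
  apply Matrix.inv_eq_right_inv
  have hDA : D * (D⁻¹ * A) = A := by rw [← mul_assoc, hDD, one_mul]
  have key : (D - A) * (1 + D⁻¹ * A) = D - A * D⁻¹ * A := by
    rw [sub_mul, mul_add, mul_add, mul_one, mul_one, hDA]
    rw [← mul_assoc]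
    abel
  have step : (D - A) * ((1 + D⁻¹ * A) * (D - A * D⁻¹ * A)⁻¹ * (1 + A * D⁻¹))
      = 1 + A * D⁻¹ := by
    rw [← mul_assoc, ← mul_assoc, key, mul_assoc, ← mul_assoc, hM, one_mul]
  have expand : (D - A) * (D⁻¹ + (1 + D⁻¹ * A) * (D - A * D⁻¹ * A)⁻¹ * (1 + A * D⁻¹))
      = (2 : ℝ) • (1 : Matrix (Fin n) (Fin n) ℝ) := by
    rw [mul_add, step, sub_mul, hDD]
    rw [two_smul]
    abel
  rw [mul_smul_comm, expand, smul_smul]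
  norm_num
end

section
/- Let D be an n×n real diagonal matrix with strictly positive diagonal entries and A a symmetric n×n real matrix such that both D − A and D − A·D⁻¹·A are positive definite. Let M̂ be a symmetric positive definite n×n matrix and ε ≥ 0 a real number such that M̂ ≈_ε (D − A·D⁻¹·A). Then (D − A)⁻¹ ≈_ε (1/2)·( D⁻¹ + (I + D⁻¹·A)·M̂⁻¹·(I + A·D⁻¹) ). -/
open Matrix

/-- `X ≈_ε Y` : both `exp(ε) • X - Y` and `Y - exp(-ε) • X` are positive semidefinite. -/
def MApprox {n : ℕ} (ε : ℝ) (X Y : Matrix (Fin n) (Fin n) ℝ) : Prop :=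
  (Real.exp ε • X - Y).PosSemidef ∧ (Y - Real.exp (-ε) • X).PosSemidef

/-- scaling a PSD matrix by a nonnegative real. -/
lemma psd_smul {n : ℕ} {M : Matrix (Fin n) (Fin n) ℝ} (h : M.PosSemidef)
    {c : ℝ} (hc : 0 ≤ c) : (c • M).PosSemidef := by
  rw [posSemidef_iff_dotProduct_mulVec]
  constructor
  · unfold Matrix.IsHermitian at *
    rw [conjTranspose_smul, h.1]
    simp
  · intro x
    rw [smul_mulVec, dotProduct_smul]
    exact mul_nonneg hc ((posSemidef_iff_dotProduct_mulVec.mp h).2 x)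

/-- scaling a PD matrix by a positive real. -/
lemma pd_smul {n : ℕ} {M : Matrix (Fin n) (Fin n) ℝ} (h : M.PosDef)
    {c : ℝ} (hc : 0 < c) : (c • M).PosDef := by
  rw [posDef_iff_dotProduct_mulVec]
  constructor
  · unfold Matrix.IsHermitian at *
    rw [conjTranspose_smul, h.1]
    simp
  · intro x hx
    rw [smul_mulVec, dotProduct_smul]
    exact mul_pos hc ((posDef_iff_dotProduct_mulVec.mp h).2 hx)

/-- inverse of a scalar multiple. -/
lemma msmul_inv {n : ℕ} (c : ℝ) (hc : c ≠ 0) (M : Matrix (Fin n) (Fin n) ℝ)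
    (hM : IsUnit M.det) : (c • M)⁻¹ = c⁻¹ • M⁻¹ := by
  apply Matrix.inv_eq_left_inv
  rw [Matrix.smul_mul, Matrix.mul_smul, Matrix.nonsing_inv_mul _ hM, smul_smul,
    inv_mul_cancel₀ hc, one_smul]

/-- antitonicity of the inverse in the Loewner order. -/
lemma inv_antitone {n : ℕ} {X Y : Matrix (Fin n) (Fin n) ℝ}
    (hX : X.PosDef) (hY : Y.PosDef) (h : (X - Y).PosSemidef) :
    (Y⁻¹ - X⁻¹).PosSemidef := by
  haveI := hX.isUnit.invertible
  haveI := hY.isUnit.invertible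
  have hXinv : (X⁻¹)ᴴ = X⁻¹ := hX.inv.isHermitian
  have hDel : (X - Y)ᴴ = X - Y := h.isHermitian
  have hid : Y⁻¹ - X⁻¹ =
      X⁻¹ * (X - Y) * X⁻¹ + (X⁻¹ * (X - Y)) * Y⁻¹ * ((X - Y) * X⁻¹) := by
    simp only [sub_mul, mul_sub, Matrix.mul_assoc, Matrix.mul_inv_cancel_left_of_invertible,
      Matrix.inv_mul_cancel_left_of_invertible, Matrix.mul_inv_of_invertible,
      Matrix.inv_mul_of_invertible, Matrix.mul_one, Matrix.one_mul]
    abel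
  rw [hid]
  have h1 : (X⁻¹ * (X - Y) * X⁻¹).PosSemidef := by
    have := h.mul_mul_conjTranspose_same X⁻¹
    rwa [hXinv] at this
  have h2 : ((X⁻¹ * (X - Y)) * Y⁻¹ * ((X - Y) * X⁻¹)).PosSemidef := by
    have := hY.inv.posSemidef.mul_mul_conjTranspose_same (X⁻¹ * (X - Y))
    rwa [conjTranspose_mul, hDel, hXinv] at this
  exact h1.add h2

/-- if `D - A` and `D - A D⁻¹ A` are positive definite, `M̂` is a symmetric
positive definite matrix with `M̂ ≈_ε (D - A D⁻¹ A)`, then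
`(D - A)⁻¹ ≈_ε (1/2) • (D⁻¹ + (I + D⁻¹ A) M̂⁻¹ (I + A D⁻¹))`. -/
theorem stmt2 {n : ℕ} (d : Fin n → ℝ) (hd : ∀ i, 0 < d i)
    (D : Matrix (Fin n) (Fin n) ℝ) (hD : D = Matrix.diagonal d)
    (A Mhat : Matrix (Fin n) (Fin n) ℝ) (hA : A.IsSymm)
    (hDA : (D - A).PosDef) (hDADA : (D - A * D⁻¹ * A).PosDef)
    (hMhatSymm : Mhat.IsSymm) (hMhatPD : Mhat.PosDef)
    (ε : ℝ) (hε : 0 ≤ ε)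
    (happrox : MApprox ε Mhat (D - A * D⁻¹ * A)) :
    MApprox ε (D - A)⁻¹
      ((1 / 2 : ℝ) • (D⁻¹ + (1 + D⁻¹ * A) * Mhat⁻¹ * (1 + A * D⁻¹))) := by
  have hDpd : D.PosDef := by rw [hD]; exact posDef_diagonal_iff.mpr hd
  set S := D - A * D⁻¹ * A with hS
  set B := (1 : Matrix (Fin n) (Fin n) ℝ) + D⁻¹ * A with hB
  set Bt := (1 : Matrix (Fin n) (Fin n) ℝ) + A * D⁻¹ with hBt
  haveI := hDpd.isUnit.invertible
  haveI := hDA.isUnit.invertible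
  haveI := hDADA.isUnit.invertible
  haveI := hMhatPD.isUnit.invertible
  have hSdet : IsUnit S.det := (Matrix.isUnit_iff_isUnit_det _).mp hDADA.isUnit
  have hMdet : IsUnit Mhat.det := (Matrix.isUnit_iff_isUnit_det _).mp hMhatPD.isUnit
  -- Bᴴ = Bt
  have hBH : Bᴴ = Bt := by
    have hAH : Aᴴ = A := by
      have := hA
      unfold Matrix.IsSymm at this
      rw [show Aᴴ = Aᵀ from rfl, this]
    have hDH : (D⁻¹)ᴴ = D⁻¹ := hDpd.inv.isHermitian
    rw [hB, hBt, conjTranspose_add, conjTranspose_one, conjTranspose_mul, hAH, hDH]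
  -- key algebraic identity
  have hDAB : (D - A) * B = S := by
    have h1 : D * (D⁻¹ * A) = A := by
      rw [← Matrix.mul_assoc, Matrix.mul_inv_of_invertible, Matrix.one_mul]
    rw [hB, hS, Matrix.mul_add, Matrix.mul_one, Matrix.sub_mul, h1, ← Matrix.mul_assoc]
    abel
  have hmain : (D - A) * (D⁻¹ + B * S⁻¹ * Bt) = (2 : ℝ) • 1 := by
    rw [Matrix.mul_add, ← Matrix.mul_assoc, ← Matrix.mul_assoc, hDAB,
      Matrix.mul_inv_of_invertible, Matrix.one_mul, Matrix.sub_mul,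
      Matrix.mul_inv_of_invertible, hBt, two_smul]
    abel
  have hinv : (D - A)⁻¹ = (1 / 2 : ℝ) • (D⁻¹ + B * S⁻¹ * Bt) := by
    have h := congrArg (fun X => (D - A)⁻¹ * X) hmain
    simp only [← Matrix.mul_assoc, Matrix.inv_mul_of_invertible, Matrix.one_mul,
      Matrix.mul_smul, Matrix.mul_one] at h
    rw [h, smul_smul]
    norm_num
  have hexp : Real.exp ε * Real.exp (-ε) = 1 := by rw [← Real.exp_add]; simp
  constructor
  · -- first direction
    have key1 : (Real.exp ε • S⁻¹ - Mhat⁻¹).PosSemidef := by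
      have hpd : (Real.exp ε • Mhat).PosDef := pd_smul hMhatPD (Real.exp_pos ε)
      have h0 : (S⁻¹ - (Real.exp ε • Mhat)⁻¹).PosSemidef := inv_antitone hpd hDADA happrox.1
      rw [msmul_inv _ (Real.exp_ne_zero ε) _ hMdet, ← Real.exp_neg] at h0
      have h1 := psd_smul h0 (le_of_lt (Real.exp_pos ε))
      rwa [smul_sub, smul_smul, hexp, one_smul] at h1
    have hEq : Real.exp ε • (D - A)⁻¹ - (1 / 2 : ℝ) • (D⁻¹ + B * Mhat⁻¹ * Bt) =
        (1 / 2 : ℝ) • ((Real.exp ε - 1) • D⁻¹ + B * (Real.exp ε • S⁻¹ - Mhat⁻¹) * Bt) := by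
      rw [hinv]
      simp only [Matrix.mul_sub, Matrix.sub_mul, Matrix.mul_smul, Matrix.smul_mul,
        smul_add, smul_sub, sub_smul, smul_smul]
      module
    rw [hEq]
    apply psd_smul _ (by norm_num)
    apply Matrix.PosSemidef.add
    · exact psd_smul hDpd.inv.posSemidef (by linarith [Real.one_le_exp hε])
    · have := key1.mul_mul_conjTranspose_same B
      rwa [hBH] at this
  · -- second direction
    have key2 : (Mhat⁻¹ - Real.exp (-ε) • S⁻¹).PosSemidef := by
      have hpd : (Real.exp ε • S).PosDef := pd_smul hDADA (Real.exp_pos ε)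
      have hdiff : (Real.exp ε • S - Mhat).PosSemidef := by
        have h1 := psd_smul happrox.2 (le_of_lt (Real.exp_pos ε))
        rwa [smul_sub, smul_smul, hexp, one_smul] at h1
      have h0 : (Mhat⁻¹ - (Real.exp ε • S)⁻¹).PosSemidef := inv_antitone hpd hMhatPD hdiff
      rwa [msmul_inv _ (Real.exp_ne_zero ε) _ hSdet, ← Real.exp_neg] at h0
    have hEq : (1 / 2 : ℝ) • (D⁻¹ + B * Mhat⁻¹ * Bt) - Real.exp (-ε) • (D - A)⁻¹ =
        (1 / 2 : ℝ) • ((1 - Real.exp (-ε)) • D⁻¹ +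
          B * (Mhat⁻¹ - Real.exp (-ε) • S⁻¹) * Bt) := by
      rw [hinv]
      simp only [Matrix.mul_sub, Matrix.sub_mul, Matrix.mul_smul, Matrix.smul_mul,
        smul_add, smul_sub, sub_smul, smul_smul]
      module
    rw [hEq]
    apply psd_smul _ (by norm_num)
    apply Matrix.PosSemidef.add
    · have : Real.exp (-ε) ≤ 1 := Real.exp_le_one_iff.mpr (by linarith)
      exact psd_smul hDpd.inv.posSemidef (by linarith)
    · have := key2.mul_mul_conjTranspose_same B
      rwa [hBH] at this
end

section
/- Let D be an n×n real diagonal matrix with strictly positive diagonal entries, let A be a symmetric n×n real matrix with nonnegative entries, and let 0 ≤ λ ≤ 1. If D^{-1/2}·A·D^{-1/2} ⪯ (1−λ)·I, then 0 ⪯ D^{-1/2}·A·D⁻¹·A·D^{-1/2} ⪯ (1−λ)²·I; equivalently, all eigenvalues of D⁻¹·A·D⁻¹·A lie between 0 and (1−λ)². -/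
open Matrix

/-- if `D` is diagonal with positive entries, `A` is symmetric nonnegative,
`0 ≤ λ ≤ 1` and `D^{-1/2} A D^{-1/2} ⪯ (1-λ) I`, then
`0 ⪯ D^{-1/2} A D⁻¹ A D^{-1/2} ⪯ (1-λ)² I`. -/
theorem stmt4 {n : ℕ} (d : Fin n → ℝ) (hd : ∀ i, 0 < d i)
    (D : Matrix (Fin n) (Fin n) ℝ) (hD : D = Matrix.diagonal d)
    (A : Matrix (Fin n) (Fin n) ℝ) (hA : A.IsSymm) (hAnn : ∀ i j, 0 ≤ A i j)
    (lam : ℝ) (hlam0 : 0 ≤ lam) (hlam1 : lam ≤ 1)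
    (S : Matrix (Fin n) (Fin n) ℝ)
    (hS : S = Matrix.diagonal fun i => (Real.sqrt (d i))⁻¹)
    (hbound : ((1 - lam) • (1 : Matrix (Fin n) (Fin n) ℝ) - S * A * S).PosSemidef) :
    (S * A * D⁻¹ * A * S).PosSemidef ∧
      ((1 - lam) ^ 2 • (1 : Matrix (Fin n) (Fin n) ℝ) - S * A * D⁻¹ * A * S).PosSemidef := by
  set c : ℝ := 1 - lam with hc_def
  have hc : 0 ≤ c := by simp [hc_def]; linarith
  set M : Matrix (Fin n) (Fin n) ℝ := S * A * S with hM_def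
  -- D⁻¹ = diagonal of inverses
  have hDinv : D⁻¹ = Matrix.diagonal (fun i => (d i)⁻¹) := by
    rw [hD]
    apply inv_eq_right_inv
    rw [diagonal_mul_diagonal]
    have : (fun i => d i * (d i)⁻¹) = fun _ => (1 : ℝ) := by
      funext i; exact mul_inv_cancel₀ (hd i).ne'
    rw [this, diagonal_one]
  -- S * S = D⁻¹
  have hSS : S * S = D⁻¹ := by
    rw [hS, hDinv, diagonal_mul_diagonal]
    have : (fun i => (Real.sqrt (d i))⁻¹ * (Real.sqrt (d i))⁻¹) = fun i => (d i)⁻¹ := by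
      funext i
      rw [← mul_inv, Real.mul_self_sqrt (hd i).le]
    rw [this]
  have key : S * A * D⁻¹ * A * S = M * M := by
    rw [← hSS, hM_def]
    simp only [Matrix.mul_assoc]
  -- symmetry of M
  have hAT : Aᵀ = A := hA
  have hST : Sᵀ = S := by rw [hS, diagonal_transpose]
  have hMT : Mᵀ = M := by
    rw [hM_def, transpose_mul, transpose_mul, hAT, hST]
    simp only [Matrix.mul_assoc]
  have hMherm : M.IsHermitian := by
    rw [Matrix.IsHermitian, conjTranspose_eq_transpose_of_trivial, hMT]
  -- nonneg entries of M
  have hMnn : ∀ i j, 0 ≤ M i j := by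
    intro i j
    rw [hM_def, hS, mul_diagonal, diagonal_mul]
    have h1 : (0:ℝ) ≤ (Real.sqrt (d i))⁻¹ := inv_nonneg.2 (Real.sqrt_nonneg _)
    have h2 : (0:ℝ) ≤ (Real.sqrt (d j))⁻¹ := inv_nonneg.2 (Real.sqrt_nonneg _)
    exact mul_nonneg (mul_nonneg h1 (hAnn _ _)) h2
  -- dot product self nonneg
  have dps : ∀ x : Fin n → ℝ, 0 ≤ x ⬝ᵥ x := fun x =>
    Finset.sum_nonneg fun i _ => mul_self_nonneg _
  -- upper quadratic bound from hbound
  have hub : ∀ x : Fin n → ℝ, x ⬝ᵥ M *ᵥ x ≤ c * (x ⬝ᵥ x) := by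
    intro x
    have h := hbound.dotProduct_mulVec_nonneg x
    rw [star_trivial, sub_mulVec, dotProduct_sub, smul_mulVec, one_mulVec,
      dotProduct_smul, smul_eq_mul] at h
    linarith
  -- symmetry of quadratic form
  have hsym : ∀ x y : Fin n → ℝ, y ⬝ᵥ M *ᵥ x = x ⬝ᵥ M *ᵥ y := by
    intro x y
    rw [dotProduct_mulVec, ← mulVec_transpose, hMT]
    exact dotProduct_comm _ _
  -- lower quadratic bound from nonneg entries
  have hlb : ∀ x : Fin n → ℝ, -(c * (x ⬝ᵥ x)) ≤ x ⬝ᵥ M *ᵥ x := by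
    intro x
    set y : Fin n → ℝ := fun i => |x i| with hy_def
    have hyy : y ⬝ᵥ y = x ⬝ᵥ x := by
      simp only [dotProduct, hy_def, abs_mul_abs_self]
    have h1 : y ⬝ᵥ M *ᵥ y ≤ c * (x ⬝ᵥ x) := by rw [← hyy]; exact hub y
    have h2 : -(y ⬝ᵥ M *ᵥ y) ≤ x ⬝ᵥ M *ᵥ x := by
      simp only [dotProduct, mulVec, Finset.mul_sum, ← Finset.sum_neg_distrib]
      apply Finset.sum_le_sum
      intro i _
      apply Finset.sum_le_sum
      intro j _
      have habs : |x i * (M i j * x j)| = y i * (M i j * y j) := by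
        rw [abs_mul, abs_mul, abs_of_nonneg (hMnn i j)]
      calc -(y i * (M i j * y j)) = -|x i * (M i j * x j)| := by rw [habs]
        _ ≤ x i * (M i j * x j) := neg_abs_le _
    linarith
  -- bilinear bound via polarization
  have hbil : ∀ x y : Fin n → ℝ, x ⬝ᵥ M *ᵥ y ≤ c / 2 * (x ⬝ᵥ x + y ⬝ᵥ y) := by
    intro x y
    have h1 := hub (x + y)
    have h2 := hlb (x - y)
    have e1 : (x + y) ⬝ᵥ M *ᵥ (x + y) =
        x ⬝ᵥ M *ᵥ x + 2 * (x ⬝ᵥ M *ᵥ y) + y ⬝ᵥ M *ᵥ y := by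
      rw [mulVec_add, dotProduct_add, add_dotProduct, add_dotProduct, hsym y x]
      ring
    have e2 : (x - y) ⬝ᵥ M *ᵥ (x - y) =
        x ⬝ᵥ M *ᵥ x - 2 * (x ⬝ᵥ M *ᵥ y) + y ⬝ᵥ M *ᵥ y := by
      rw [mulVec_sub, dotProduct_sub, sub_dotProduct, sub_dotProduct, hsym y x]
      ring
    have e3 : (x + y) ⬝ᵥ (x + y) = x ⬝ᵥ x + 2 * (x ⬝ᵥ y) + y ⬝ᵥ y := by
      rw [dotProduct_add, add_dotProduct, add_dotProduct, dotProduct_comm y x]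
      ring
    have e4 : (x - y) ⬝ᵥ (x - y) = x ⬝ᵥ x - 2 * (x ⬝ᵥ y) + y ⬝ᵥ y := by
      rw [dotProduct_sub, sub_dotProduct, sub_dotProduct, dotProduct_comm y x]
      ring
    rw [e1, e3] at h1
    rw [e2, e4] at h2
    ring_nf at h1 h2 ⊢
    linarith
  -- operator norm bound
  have hop : ∀ x : Fin n → ℝ, (M *ᵥ x) ⬝ᵥ (M *ᵥ x) ≤ c ^ 2 * (x ⬝ᵥ x) := by
    intro x
    set y : Fin n → ℝ := M *ᵥ x with hy_def
    set s : ℝ := y ⬝ᵥ y with hs_def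
    set p : ℝ := x ⬝ᵥ x with hp_def
    have hs0 : 0 ≤ s := dps y
    have hp0 : 0 ≤ p := dps x
    have ht : ∀ t : ℝ, t * s ≤ c / 2 * (t ^ 2 * p + s) := by
      intro t
      have h := hbil (t • x) y
      have e1 : (t • x) ⬝ᵥ M *ᵥ y = t * s := by
        rw [smul_dotProduct, smul_eq_mul, hsym y x, hy_def]
      have e2 : (t • x) ⬝ᵥ (t • x) = t ^ 2 * p := by
        rw [smul_dotProduct, dotProduct_smul, smul_eq_mul, smul_eq_mul]; ring
      rw [e1, e2] at h
      exact h
    rcases eq_or_lt_of_le hs0 with hs | hs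
    · rw [← hs]; positivity
    · -- s > 0; derive c > 0 and p > 0
      have hcpos : 0 < c := by
        rcases eq_or_lt_of_le hc with h0 | h0
        · exfalso
          have := ht 1
          rw [← h0] at this
          simp at this
          linarith
        · exact h0
      have hppos : 0 < p := by
        rcases eq_or_lt_of_le hp0 with h0 | h0
        · exfalso
          have := ht (c / 2 + 1)
          rw [← h0] at this
          nlinarith
        · exact h0
      set t : ℝ := s / (c * p) with ht_def
      have hq : c * p ≠ 0 := by positivity
      have htcp : t * (c * p) = s := div_mul_cancel₀ s hq
      have htpos : 0 < t := div_pos hs (mul_pos hcpos hppos)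
      clear_value t s p y c M
      have h := ht t
      have hsub : s = t * (c * p) := htcp.symm
      rw [hsub] at h ⊢
      have hkey : t ≤ c := by
        nlinarith [mul_pos htpos (mul_pos hcpos hppos), mul_pos hcpos hppos, htpos, hcpos,
          hppos]
      nlinarith [mul_pos hcpos hppos]
  -- first conclusion
  have hpsd1 : (M * M).PosSemidef := by
    have := posSemidef_conjTranspose_mul_self M
    rwa [hMherm.eq] at this
  constructor
  · rw [key]; exact hpsd1
  · rw [key]
    refine PosSemidef.of_dotProduct_mulVec_nonneg ?_ ?_
    · rw [Matrix.IsHermitian, conjTranspose_sub, conjTranspose_smul, conjTranspose_one,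
        conjTranspose_mul, hMherm.eq]
      simp
    · intro x
      rw [star_trivial, sub_mulVec, dotProduct_sub, smul_mulVec, one_mulVec,
        dotProduct_smul, smul_eq_mul]
      have e : x ⬝ᵥ (M * M) *ᵥ x = (M *ᵥ x) ⬝ᵥ (M *ᵥ x) := by
        rw [← mulVec_mulVec, dotProduct_mulVec, ← mulVec_transpose, hMT]
      rw [e]
      have := hop x
      linarith
end

section
/- Let D be an n×n real diagonal matrix and A a symmetric n×n real matrix with nonnegative entries such that M := D − A is positive definite and diagonally dominant (i.e., for every i, M_{ii} ≥ ∑_{j ≠ i} |M_{ij}|). Then the matrix A·D⁻¹·A has nonnegative entries, and M̂ := D − A·D⁻¹·A is symmetric, positive definite, diagonally dominant, and has nonpositive off-diagonal entries after subtracting the nonnegative matrix A·D⁻¹·A from the diagonal matrix D (i.e., all off-diagonal entries of M̂ are nonpositive). -/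
open Matrix Finset

lemma erase_sum_swap {n : ℕ} (f : Fin n → Fin n → ℝ) :
    ∑ i, ∑ j ∈ Finset.univ.erase i, f i j = ∑ j, ∑ i ∈ Finset.univ.erase j, f i j := by
  have h : ∀ (g : Fin n → Fin n → ℝ) (i : Fin n),
      ∑ j ∈ Finset.univ.erase i, g i j = (∑ j, g i j) - g i i := by
    intro g i
    rw [← Finset.sum_erase_add _ _ (Finset.mem_univ i)]; ring
  calc ∑ i, ∑ j ∈ Finset.univ.erase i, f i j
      = ∑ i, ((∑ j, f i j) - f i i) := Finset.sum_congr rfl fun i _ => h f i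
    _ = (∑ i, ∑ j, f i j) - ∑ i, f i i := Finset.sum_sub_distrib _ _
    _ = (∑ j, ∑ i, f i j) - ∑ j, f j j := by rw [Finset.sum_comm]
    _ = ∑ j, ((∑ i, f i j) - f j j) := (Finset.sum_sub_distrib _ _).symm
    _ = ∑ j, ∑ i ∈ Finset.univ.erase j, f i j :=
        Finset.sum_congr rfl fun j _ => (h (fun j i => f i j) j).symm

lemma quad_form_expand {n : ℕ} (M : Matrix (Fin n) (Fin n) ℝ) (x : Fin n → ℝ) :
    x ⬝ᵥ M *ᵥ x = ∑ i, ∑ j, M i j * (x i * x j) := by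
  simp only [dotProduct, Matrix.mulVec, dotProduct, Finset.mul_sum]
  exact Finset.sum_congr rfl fun i _ => Finset.sum_congr rfl fun j _ => by ring

lemma posSemidef_of_dd {n : ℕ} (M : Matrix (Fin n) (Fin n) ℝ) (hs : M.IsSymm)
    (hd : ∀ i, ∑ j ∈ Finset.univ.erase i, |M i j| ≤ M i i) : M.PosSemidef := by
  rw [posSemidef_iff_dotProduct_mulVec]; constructor
  · rw [IsHermitian, conjTranspose_eq_transpose_of_trivial]; exact hs
  · intro x
    rw [star_trivial, quad_form_expand]
    have hsplit : ∀ i : Fin n, ∑ j, M i j * (x i * x j)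
        = M i i * (x i)^2 + ∑ j ∈ Finset.univ.erase i, M i j * (x i * x j) := by
      intro i
      rw [← Finset.sum_erase_add _ _ (Finset.mem_univ i)]; ring
    simp only [hsplit]
    rw [Finset.sum_add_distrib]
    set R := ∑ i, ∑ j ∈ Finset.univ.erase i, M i j * (x i * x j) with hR
    set T1 := ∑ i, ∑ j ∈ Finset.univ.erase i, |M i j| * (x i)^2 with hT1
    set T2 := ∑ i, ∑ j ∈ Finset.univ.erase i, |M i j| * (x j)^2 with hT2
    have hsym : ∀ i j : Fin n, |M j i| = |M i j| := by
      intro i j; rw [← Matrix.IsSymm.apply hs]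
    have hT12 : T2 = T1 := by
      rw [hT2, erase_sum_swap]
      exact Finset.sum_congr rfl fun j _ => Finset.sum_congr rfl fun i _ => by rw [hsym i j]
    have hbound : ∀ i j : Fin n,
        -(|M i j| * (x i)^2 + |M i j| * (x j)^2) ≤ 2 * (M i j * (x i * x j)) := by
      intro i j
      nlinarith [mul_nonneg (by linarith [neg_abs_le (M i j)] : (0:ℝ) ≤ |M i j| + M i j)
          (sq_nonneg (x i + x j)),
        mul_nonneg (by linarith [le_abs_self (M i j)] : (0:ℝ) ≤ |M i j| - M i j)
          (sq_nonneg (x i - x j))]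
    have h1 : (∑ i, ∑ j ∈ Finset.univ.erase i, -(|M i j| * (x i)^2 + |M i j| * (x j)^2))
        ≤ ∑ i, ∑ j ∈ Finset.univ.erase i, 2 * (M i j * (x i * x j)) :=
      Finset.sum_le_sum fun i _ => Finset.sum_le_sum fun j _ => hbound i j
    have hL : (∑ i, ∑ j ∈ Finset.univ.erase i, -(|M i j| * (x i)^2 + |M i j| * (x j)^2))
        = -(T1 + T2) := by
      simp only [hT1, hT2, neg_add, ← Finset.sum_neg_distrib, ← Finset.sum_add_distrib]
    have hRR : (∑ i, ∑ j ∈ Finset.univ.erase i, 2 * (M i j * (x i * x j))) = 2 * R := by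
      simp only [hR, Finset.mul_sum]
    have hdiag : T1 ≤ ∑ i, M i i * (x i)^2 := by
      rw [hT1]
      refine Finset.sum_le_sum fun i _ => ?_
      rw [← Finset.sum_mul]
      exact mul_le_mul_of_nonneg_right (hd i) (sq_nonneg _)
    linarith

lemma posdef_entry {n : ℕ} {M : Matrix (Fin n) (Fin n) ℝ} (h : M.PosDef) (i : Fin n) :
    0 < M i i := by
  have := h.dotProduct_mulVec_pos (x := Pi.single i 1) (by simp [Pi.single_eq_same, funext_iff]; exact ⟨i, by simp⟩)
  simpa [dotProduct, Matrix.mulVec, Pi.single_apply, Finset.sum_ite_eq, Finset.mul_sum] using this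

/-- if `M = D - A` is positive definite and diagonally dominant, with `D`
diagonal and `A` symmetric nonnegative, then `A D⁻¹ A` is nonnegative and
`M̂ = D - A D⁻¹ A` is symmetric, positive definite, diagonally dominant, and has
nonpositive off-diagonal entries. -/
theorem stmt9 {n : ℕ} (dv : Fin n → ℝ)
    (D : Matrix (Fin n) (Fin n) ℝ) (hD : D = Matrix.diagonal dv)
    (A : Matrix (Fin n) (Fin n) ℝ) (hA : A.IsSymm) (hAnn : ∀ i j, 0 ≤ A i j)
    (hPD : (D - A).PosDef)
    (hDomin : ∀ i, ∑ j ∈ Finset.univ.erase i, |(D - A) i j| ≤ (D - A) i i) :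
    (∀ i j, 0 ≤ (A * D⁻¹ * A) i j) ∧
      (D - A * D⁻¹ * A).IsSymm ∧
      (D - A * D⁻¹ * A).PosDef ∧
      (∀ i, ∑ j ∈ Finset.univ.erase i, |(D - A * D⁻¹ * A) i j| ≤ (D - A * D⁻¹ * A) i i) ∧
      (∀ i j, i ≠ j → (D - A * D⁻¹ * A) i j ≤ 0) := by
  subst hD
  -- basic positivity of the diagonal
  have hMdiag : ∀ i, 0 < dv i - A i i := by
    intro i
    have := posdef_entry hPD i
    simpa [Matrix.sub_apply, Matrix.diagonal_apply_eq] using this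
  have hdv : ∀ i, 0 < dv i := fun i => lt_of_lt_of_le (hMdiag i) (by linarith [hAnn i i])
  have hdvne : ∀ i, dv i ≠ 0 := fun i => ne_of_gt (hdv i)
  set w : Fin n → ℝ := fun i => (dv i)⁻¹ with hw
  have hone : Matrix.diagonal dv * Matrix.diagonal w = 1 := by
    rw [Matrix.diagonal_mul_diagonal]
    have h : (fun i => dv i * w i) = fun _ => (1:ℝ) := funext fun i => mul_inv_cancel₀ (hdvne i)
    rw [h, Matrix.diagonal_one]
  have hDinv : (Matrix.diagonal dv)⁻¹ = Matrix.diagonal w := Matrix.inv_eq_right_inv hone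
  -- entries of E = A D⁻¹ A
  have hEapp : ∀ i j, (A * (Matrix.diagonal dv)⁻¹ * A) i j
      = ∑ k, A i k * (w k * A k j) := by
    intro i j
    rw [hDinv, Matrix.mul_apply]
    exact Finset.sum_congr rfl fun k _ => by rw [Matrix.mul_diagonal]; ring
  have hwpos : ∀ k, 0 ≤ w k := fun k => le_of_lt (inv_pos.mpr (hdv k))
  have part1 : ∀ i j, 0 ≤ (A * (Matrix.diagonal dv)⁻¹ * A) i j := by
    intro i j
    rw [hEapp]
    exact Finset.sum_nonneg fun k _ =>
      mul_nonneg (hAnn i k) (mul_nonneg (hwpos k) (hAnn k j))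
  -- symmetry
  have hEsymm : (A * (Matrix.diagonal dv)⁻¹ * A)ᵀ = A * (Matrix.diagonal dv)⁻¹ * A := by
    rw [Matrix.transpose_mul, Matrix.transpose_mul, hDinv, Matrix.diagonal_transpose, hA,
      Matrix.mul_assoc]
  have part2 : (Matrix.diagonal dv - A * (Matrix.diagonal dv)⁻¹ * A).IsSymm := by
    rw [Matrix.IsSymm, Matrix.transpose_sub, Matrix.diagonal_transpose, hEsymm]
  -- rewritten diagonal dominance of D - A
  have hDomA : ∀ i, ∑ j ∈ Finset.univ.erase i, A i j ≤ dv i - A i i := by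
    intro i
    have h := hDomin i
    have he : ∑ j ∈ Finset.univ.erase i, |(Matrix.diagonal dv - A) i j|
        = ∑ j ∈ Finset.univ.erase i, A i j := by
      refine Finset.sum_congr rfl fun j hj => ?_
      have hji : i ≠ j := (Finset.ne_of_mem_erase hj).symm
      rw [Matrix.sub_apply, Matrix.diagonal_apply_ne dv hji, zero_sub, abs_neg,
        abs_of_nonneg (hAnn i j)]
    rw [he] at h
    simpa [Matrix.sub_apply, Matrix.diagonal_apply_eq] using h
  have hrow : ∀ k, ∑ j, A k j ≤ dv k := by
    intro k
    rw [← Finset.sum_erase_add _ _ (Finset.mem_univ k)]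
    linarith [hDomA k]
  -- row sums of E
  have hEsum : ∀ i, ∑ j, (A * (Matrix.diagonal dv)⁻¹ * A) i j ≤ dv i := by
    intro i
    have h1 : ∑ j, (A * (Matrix.diagonal dv)⁻¹ * A) i j
        = ∑ k, A i k * (w k * ∑ j, A k j) := by
      simp only [hEapp]
      rw [Finset.sum_comm]
      exact Finset.sum_congr rfl fun k _ => by rw [Finset.mul_sum]; simp [Finset.mul_sum]
    rw [h1]
    calc ∑ k, A i k * (w k * ∑ j, A k j) ≤ ∑ k, A i k := by
          refine Finset.sum_le_sum fun k _ => ?_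
          have : w k * ∑ j, A k j ≤ 1 := by
            rw [hw]
            calc (dv k)⁻¹ * ∑ j, A k j ≤ (dv k)⁻¹ * dv k :=
                  mul_le_mul_of_nonneg_left (hrow k) (hwpos k)
              _ = 1 := inv_mul_cancel₀ (hdvne k)
          nlinarith [hAnn i k]
      _ ≤ dv i := hrow i
  -- diagonal dominance of M̂
  have part4 : ∀ i, ∑ j ∈ Finset.univ.erase i,
      |(Matrix.diagonal dv - A * (Matrix.diagonal dv)⁻¹ * A) i j|
      ≤ (Matrix.diagonal dv - A * (Matrix.diagonal dv)⁻¹ * A) i i := by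
    intro i
    have he : ∑ j ∈ Finset.univ.erase i,
        |(Matrix.diagonal dv - A * (Matrix.diagonal dv)⁻¹ * A) i j|
        = ∑ j ∈ Finset.univ.erase i, (A * (Matrix.diagonal dv)⁻¹ * A) i j := by
      refine Finset.sum_congr rfl fun j hj => ?_
      have hji : i ≠ j := (Finset.ne_of_mem_erase hj).symm
      rw [Matrix.sub_apply, Matrix.diagonal_apply_ne dv hji, zero_sub, abs_neg,
        abs_of_nonneg (part1 i j)]
    rw [he]
    have hsplit : ∑ j ∈ Finset.univ.erase i, (A * (Matrix.diagonal dv)⁻¹ * A) i j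
        = (∑ j, (A * (Matrix.diagonal dv)⁻¹ * A) i j)
          - (A * (Matrix.diagonal dv)⁻¹ * A) i i := by
      rw [← Finset.sum_erase_add _ _ (Finset.mem_univ i)]; ring
    rw [hsplit]
    have := hEsum i
    simp only [Matrix.sub_apply, Matrix.diagonal_apply_eq]
    linarith
  -- off-diagonal nonpositivity
  have part5 : ∀ i j, i ≠ j →
      (Matrix.diagonal dv - A * (Matrix.diagonal dv)⁻¹ * A) i j ≤ 0 := by
    intro i j hij
    rw [Matrix.sub_apply, Matrix.diagonal_apply_ne dv hij, zero_sub]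
    linarith [part1 i j]
  -- positive semidefiniteness of D + A
  have hpsd : (Matrix.diagonal dv + A).PosSemidef := by
    apply posSemidef_of_dd
    · rw [Matrix.IsSymm, Matrix.transpose_add, Matrix.diagonal_transpose, hA]
    · intro i
      have he : ∑ j ∈ Finset.univ.erase i, |(Matrix.diagonal dv + A) i j|
          = ∑ j ∈ Finset.univ.erase i, A i j := by
        refine Finset.sum_congr rfl fun j hj => ?_
        have hji : i ≠ j := (Finset.ne_of_mem_erase hj).symm
        rw [Matrix.add_apply, Matrix.diagonal_apply_ne dv hji, zero_add,
          abs_of_nonneg (hAnn i j)]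
      rw [he]
      have := hDomA i
      simp only [Matrix.add_apply, Matrix.diagonal_apply_eq]
      linarith [hAnn i i]
  -- positive definiteness of M̂
  have part3 : (Matrix.diagonal dv - A * (Matrix.diagonal dv)⁻¹ * A).PosDef := by
    rw [posDef_iff_dotProduct_mulVec]; constructor
    · rw [Matrix.IsHermitian, Matrix.conjTranspose_eq_transpose_of_trivial]; exact part2
    · intro x hx
      rw [star_trivial]
      set y : Fin n → ℝ := (Matrix.diagonal dv)⁻¹ *ᵥ (A *ᵥ x) with hy
      have hDy : Matrix.diagonal dv *ᵥ y = A *ᵥ x := by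
        rw [hy, hDinv, Matrix.mulVec_mulVec, hone, Matrix.one_mulVec]
      have hMx : (A * (Matrix.diagonal dv)⁻¹ * A) *ᵥ x = A *ᵥ y := by
        rw [hy, Matrix.mulVec_mulVec, Matrix.mulVec_mulVec]
      have hAdot : ∀ u v : Fin n → ℝ, u ⬝ᵥ (A *ᵥ v) = v ⬝ᵥ (A *ᵥ u) := by
        intro u v
        rw [Matrix.dotProduct_mulVec, ← Matrix.mulVec_transpose, hA, dotProduct_comm]
      have hiden : x ⬝ᵥ ((Matrix.diagonal dv - A * (Matrix.diagonal dv)⁻¹ * A) *ᵥ x) * 2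
          = (x + y) ⬝ᵥ ((Matrix.diagonal dv - A) *ᵥ (x + y))
            + (x - y) ⬝ᵥ ((Matrix.diagonal dv + A) *ᵥ (x - y)) := by
        simp only [Matrix.sub_mulVec, Matrix.add_mulVec, Matrix.mulVec_add, Matrix.mulVec_sub,
          dotProduct_sub, dotProduct_add, add_dotProduct, sub_dotProduct, hMx]
        have h1 : y ⬝ᵥ (Matrix.diagonal dv *ᵥ y) = y ⬝ᵥ (A *ᵥ x) := by rw [hDy]
        have h2 : x ⬝ᵥ (Matrix.diagonal dv *ᵥ y) = x ⬝ᵥ (A *ᵥ x) := by rw [hDy]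
        have h3 : y ⬝ᵥ (Matrix.diagonal dv *ᵥ x) = x ⬝ᵥ (A *ᵥ x) := by
          rw [Matrix.dotProduct_mulVec, ← Matrix.mulVec_transpose, Matrix.diagonal_transpose,
            dotProduct_comm, hDy]
        have h4 : y ⬝ᵥ (A *ᵥ x) = x ⬝ᵥ (A *ᵥ y) := hAdot y x
        linarith
      by_cases hxy : x + y = 0
      · -- then (D + A) x = 0, contradiction with positivity via |x|
        exfalso
        have hyx : y = -x := by
          have h := hxy; rw [add_comm] at h; exact add_eq_zero_iff_eq_neg.mp h
        have hAxx : A *ᵥ x = -(Matrix.diagonal dv *ᵥ x) := by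
          rw [← hDy, hyx, Matrix.mulVec_neg]
        set z : Fin n → ℝ := fun i => |x i| with hz
        have hzne : z ≠ 0 := by
          intro h0
          apply hx
          funext i
          have := congrFun h0 i
          simpa [hz, abs_eq_zero] using this
        have hquad := hPD.dotProduct_mulVec_pos hzne
        rw [star_trivial] at hquad
        have hle : ∀ i, dv i * z i ≤ (A *ᵥ z) i := by
          intro i
          have h1 : (A *ᵥ x) i = -(dv i * x i) := by
            rw [hAxx]; simp [Matrix.mulVec_diagonal]
          have h2 : dv i * z i = |(A *ᵥ x) i| := by
            rw [h1, abs_neg, abs_mul, abs_of_pos (hdv i)]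
          rw [h2]
          calc |(A *ᵥ x) i| ≤ ∑ j, |A i j * x j| := by
                rw [Matrix.mulVec]
                exact Finset.abs_sum_le_sum_abs _ _
            _ = ∑ j, A i j * z j := Finset.sum_congr rfl fun j _ => by
                rw [abs_mul, abs_of_nonneg (hAnn i j)]
            _ = (A *ᵥ z) i := rfl
        have hneg : z ⬝ᵥ ((Matrix.diagonal dv - A) *ᵥ z) ≤ 0 := by
          rw [Matrix.sub_mulVec, dotProduct_sub, sub_nonpos]
          refine Finset.sum_le_sum fun i _ => ?_
          have := hle i
          have hz0 : 0 ≤ z i := abs_nonneg _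
          simp only [Matrix.mulVec_diagonal]
          nlinarith
        linarith
      · have t1 : 0 < (x + y) ⬝ᵥ ((Matrix.diagonal dv - A) *ᵥ (x + y)) := by
          have := hPD.dotProduct_mulVec_pos hxy
          rwa [star_trivial] at this
        have t2 : 0 ≤ (x - y) ⬝ᵥ ((Matrix.diagonal dv + A) *ᵥ (x - y)) := by
          have := hpsd.dotProduct_mulVec_nonneg (x - y)
          rwa [star_trivial] at this
        linarith
  exact ⟨part1, part2, part3, part4, part5⟩
end

section
/- Let A be a symmetric n×n real matrix with nonnegative entries, D an n×n real diagonal matrix with strictly positive diagonal entries, and u an index with d_u := ∑_{v ≠ u} A_{uv} > 0. Define the n×n matrix L_u by (L_u)_{vw} = −A_{uv}·A_{uw}/D_{uu} for distinct v, w both different from u, (L_u)_{vv} = ∑_{w ≠ v, w ≠ u} A_{uv}·A_{uw}/D_{uu} for v ≠ u, and all entries in row u and column u equal to 0. Then for any two distinct indices v, w different from u with A_{uv} > 0 and A_{uw} > 0, the vector y := (D_{uu}/d_u)·( e_v/A_{uv} − e_w/A_{uw} ) satisfies L_u · y = e_v − e_w and (e_v − e_w)ᵀ · y = (D_{uu}/d_u)·(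 1/A_{uv} + 1/A_{uw} ). In particular, the effective resistance between v and w in the weighted complete graph on the neighbors of u with edge weights A_{uv}·A_{uw}/D_{uu} equals (D_{uu}/d_u)·( 1/A_{uv} + 1/A_{uw} ). -/
open Matrix

/-- `L_u` is the Laplacian of the weighted complete graph on the neighbors of
`u` in which the edge `{v, w}` has weight `A_{uv} A_{uw} / D_{uu}`.  For distinct
`v, w ≠ u` with `A_{uv}, A_{uw} > 0`, the vector
`y = (D_{uu}/d_u) (e_v / A_{uv} - e_w / A_{uw})` satisfies `L_u y = e_v - e_w` and
`(e_v - e_w)ᵀ y = (D_{uu}/d_u) (1/A_{uv} + 1/A_{uw})`, so the effective resistance between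
`v` and `w` equals `(D_{uu}/d_u) (1/A_{uv} + 1/A_{uw})`. -/
theorem stmt10 {n : ℕ} (A : Matrix (Fin n) (Fin n) ℝ)
    (hA : A.IsSymm) (hAnn : ∀ i j, 0 ≤ A i j)
    (dvec : Fin n → ℝ) (hdvec : ∀ i, 0 < dvec i)
    (D : Matrix (Fin n) (Fin n) ℝ) (hD : D = Matrix.diagonal dvec)
    (u : Fin n) (du : ℝ) (hdu : du = ∑ v ∈ Finset.univ.erase u, A u v) (hdupos : 0 < du)
    (Lu : Matrix (Fin n) (Fin n) ℝ)
    (hLu : ∀ v w, Lu v w =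
      if v = u ∨ w = u then 0
      else if v = w then ∑ x ∈ (Finset.univ.erase v).erase u, A u v * A u x / D u u
      else -(A u v * A u w / D u u))
    (v w : Fin n) (hvw : v ≠ w) (hvu : v ≠ u) (hwu : w ≠ u)
    (hv : 0 < A u v) (hw : 0 < A u w)
    (y : Fin n → ℝ)
    (hy : y = (D u u / du) •
      ((A u v)⁻¹ • (Pi.single v (1 : ℝ) : Fin n → ℝ) -
        (A u w)⁻¹ • (Pi.single w (1 : ℝ) : Fin n → ℝ))) :
    Lu *ᵥ y = Pi.single v (1 : ℝ) - Pi.single w (1 : ℝ) ∧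
      (Pi.single v (1 : ℝ) - Pi.single w (1 : ℝ)) ⬝ᵥ y =
        (D u u / du) * (1 / A u v + 1 / A u w) := by
  have hvne := hv.ne'
  have hwne := hw.ne'
  have hDuu : D u u = dvec u := by rw [hD]; simp
  have hDpos : 0 < D u u := by rw [hDuu]; exact hdvec u
  have hDne := hDpos.ne'
  have hdune := hdupos.ne'
  have hval : ∀ j, y j = (if j = v then D u u / du / A u v else 0) +
      (if j = w then -(D u u / du / A u w) else 0) := by
    intro j
    rw [hy]
    by_cases hjv : j = v
    · subst hjv
      simp [Pi.single_apply, hvw, div_eq_mul_inv]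
    · by_cases hjw : j = w
      · subst hjw
        simp [Pi.single_apply, Ne.symm hvw, hjv, div_eq_mul_inv]
      · simp [Pi.single_apply, hjv, hjw]
  have hdiag : ∀ p, p ≠ u →
      (∑ x ∈ (Finset.univ.erase p).erase u, A u p * A u x / D u u)
        = A u p * (du - A u p) / D u u := by
    intro p hp
    have h1 : (Finset.univ.erase p).erase u = (Finset.univ.erase u).erase p := by
      ext x; simp [Finset.mem_erase]; tauto
    have h2 : (∑ x ∈ (Finset.univ.erase u).erase p, A u x)
        = (∑ x ∈ Finset.univ.erase u, A u x) - A u p :=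
      Finset.sum_erase_eq_sub (by simp [hp])
    rw [h1]
    calc (∑ x ∈ (Finset.univ.erase u).erase p, A u p * A u x / D u u)
        = (A u p / D u u) * ∑ x ∈ (Finset.univ.erase u).erase p, A u x := by
          rw [Finset.mul_sum]; exact Finset.sum_congr rfl fun x _ => by ring
      _ = A u p * (du - A u p) / D u u := by rw [h2, ← hdu]; ring
  constructor
  · funext i
    have hsum : (Lu *ᵥ y) i = Lu i v * (D u u / du / A u v) +
        -(Lu i w * (D u u / du / A u w)) := by
      simp only [Matrix.mulVec, dotProduct]
      calc (∑ j, Lu i j * y j)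
          = ∑ j, (Lu i j * ((if j = v then D u u / du / A u v else 0) +
              (if j = w then -(D u u / du / A u w) else 0))) := by
            refine Finset.sum_congr rfl fun j _ => ?_
            rw [hval j]
        _ = (∑ j, if j = v then Lu i j * (D u u / du / A u v) else 0) +
            (∑ j, if j = w then -(Lu i j * (D u u / du / A u w)) else 0) := by
            rw [← Finset.sum_add_distrib]
            refine Finset.sum_congr rfl fun j _ => ?_
            by_cases hjv : j = v <;> by_cases hjw : j = w <;>
              simp [hjv, hjw, mul_add, mul_neg]
        _ = Lu i v * (D u u / du / A u v) + -(Lu i w * (D u u / du / A u w)) := by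
            rw [Finset.sum_ite_eq' Finset.univ v, Finset.sum_ite_eq' Finset.univ w]
            simp
    rw [hsum]
    by_cases hiu : i = u
    · subst hiu
      simp [hLu, Pi.single_apply, Ne.symm hvu, Ne.symm hwu]
    · by_cases hiv : i = v
      · subst hiv
        rw [hLu, hLu, hdiag i hiu]
        simp only [hiu, hvu, hwu, false_or, or_self, if_false, if_neg hvw, if_pos rfl, ↓reduceIte]
        rw [Pi.sub_apply, Pi.single_apply, Pi.single_apply, if_pos rfl, if_neg hvw]
        field_simp
        ring
      · by_cases hiw : i = w
        · subst hiw
          rw [hLu, hLu, hdiag i hiu]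
          simp only [hiu, hvu, hwu, false_or, or_self, if_false,
            if_neg (Ne.symm hvw), if_pos rfl, ↓reduceIte]
          rw [Pi.sub_apply, Pi.single_apply, Pi.single_apply,
            if_neg (Ne.symm hvw), if_pos rfl]
          field_simp
          ring
        · rw [hLu, hLu]
          simp only [hiu, hvu, hwu, false_or, or_self, if_false,
            if_neg hiv, if_neg hiw]
          rw [Pi.sub_apply, Pi.single_apply, Pi.single_apply,
            if_neg hiv, if_neg hiw]
          field_simp
          ring
  · simp only [dotProduct]
    calc (∑ j, ((Pi.single v (1:ℝ) - Pi.single w (1:ℝ) : Fin n → ℝ)) j * y j)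
        = ∑ j, ((if j = v then y j else 0) + (if j = w then -(y j) else 0)) := by
          refine Finset.sum_congr rfl fun j _ => ?_
          rw [Pi.sub_apply, Pi.single_apply, Pi.single_apply]
          by_cases hjv : j = v <;> by_cases hjw : j = w <;>
            simp [hjv, hjw, hvw, Ne.symm hvw] <;> ring
      _ = y v - y w := by
          rw [Finset.sum_add_distrib, Finset.sum_ite_eq' Finset.univ v,
            Finset.sum_ite_eq' Finset.univ w]
          simp; ring
      _ = (D u u / du) * (1 / A u v + 1 / A u w) := by
          rw [hval v, hval w]
          simp [hvw, Ne.symm hvw]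
          field_simp
end

section
/- Let n ≥ 1 and let L be a symmetric positive semidefinite n×n real matrix with L·𝟏 = 0, where 𝟏 is the all-ones vector. Let λ₂ ≥ 0 be a real number such that xᵀ·L·x ≥ λ₂·‖x‖² for every x ∈ ℝⁿ orthogonal to 𝟏. Let M be the (n−1)×(n−1) principal submatrix of L obtained by deleting the first row and column. Then for every v ∈ ℝ^{n−1}, vᵀ·M·v ≥ (λ₂/n)·‖v‖². In particular, the smallest eigenvalue of M is at least λ₂/n. -/
open Matrix

/-- if `L` is a symmetric PSD `(n+1) × (n+1)` matrix with `L 𝟏 = 0` and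
`xᵀ L x ≥ λ₂ ‖x‖²` for every `x ⊥ 𝟏`, and `M` is obtained from `L` by deleting the first
row and column, then `vᵀ M v ≥ (λ₂ / (n+1)) ‖v‖²` for all `v`; in particular every
eigenvalue of `M` is at least `λ₂ / (n+1)`. -/
theorem stmt11 {n : ℕ} (L : Matrix (Fin (n + 1)) (Fin (n + 1)) ℝ)
    (hL : L.PosSemidef) (hL1 : L *ᵥ (fun _ => (1 : ℝ)) = 0)
    (lam2 : ℝ) (hlam2 : 0 ≤ lam2)
    (hquad : ∀ x : Fin (n + 1) → ℝ, (∑ i, x i) = 0 →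
      lam2 * (x ⬝ᵥ x) ≤ x ⬝ᵥ (L *ᵥ x))
    (M : Matrix (Fin n) (Fin n) ℝ) (hM : M = L.submatrix Fin.succ Fin.succ) :
    (∀ v : Fin n → ℝ, (lam2 / (n + 1)) * (v ⬝ᵥ v) ≤ v ⬝ᵥ (M *ᵥ v)) ∧
      ∀ r ∈ spectrum ℝ M, lam2 / (n + 1) ≤ r := by
  have hnpos : (0:ℝ) < (n:ℝ) + 1 := by positivity
  have hLsym : Lᵀ = L := by simpa [Matrix.IsSymm] using hL.1
  have key : ∀ v : Fin n → ℝ, (lam2 / (n + 1)) * (v ⬝ᵥ v) ≤ v ⬝ᵥ (M *ᵥ v) := by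
    intro v
    set s : ℝ := ∑ i, v i with hs
    set c : ℝ := s / (n + 1) with hc
    set y : Fin (n + 1) → ℝ := Fin.cons 0 v with hy
    set x : Fin (n + 1) → ℝ := fun i => y i - c with hx
    have hsumy : ∑ i, y i = s := by
      simp [hy, Fin.sum_univ_succ, hs]
    have hsum : ∑ i, x i = 0 := by
      simp only [hx, Finset.sum_sub_distrib, hsumy, Finset.sum_const,
        Finset.card_univ, Fintype.card_fin, nsmul_eq_mul, hc]
      field_simp
      push_cast; ring
    have hxy : x = y + (-c) • (fun _ => (1:ℝ)) := by
      funext i; simp [hx]; ring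
    have hLx : L *ᵥ x = L *ᵥ y := by
      rw [hxy, mulVec_add, mulVec_smul, hL1]; simp
    have h1Ly : (fun _ => (1:ℝ)) ⬝ᵥ (L *ᵥ y) = 0 := by
      rw [dotProduct_mulVec, ← mulVec_transpose, hLsym, hL1]
      simp
    have hxLy : x ⬝ᵥ (L *ᵥ y) = y ⬝ᵥ (L *ᵥ y) := by
      rw [hxy, add_dotProduct, smul_dotProduct, h1Ly]
      simp
    have hyLy : y ⬝ᵥ (L *ᵥ y) = v ⬝ᵥ (M *ᵥ v) := by
      simp [hy, hM, dotProduct, mulVec, Fin.sum_univ_succ]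
    have hquadx := hquad x hsum
    have hxx : x ⬝ᵥ x = v ⬝ᵥ v - s * s / (n + 1) := by
      have hyy : y ⬝ᵥ y = v ⬝ᵥ v := by
        simp [hy, dotProduct, Fin.sum_univ_succ]
      have : x ⬝ᵥ x = ∑ i, (y i * y i - 2 * c * y i + c * c) := by
        simp only [hx, dotProduct]; congr 1; funext i; ring
      rw [this]
      simp only [Finset.sum_add_distrib, Finset.sum_sub_distrib, ← Finset.mul_sum, hsumy,
        Finset.sum_const, Finset.card_univ, Fintype.card_fin, nsmul_eq_mul]
      rw [show ∑ i, y i * y i = v ⬝ᵥ v from hyy]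
      rw [hc]
      field_simp
      push_cast
      ring
    have hcs : s * s ≤ n * (v ⬝ᵥ v) := by
      have := sq_sum_le_card_mul_sum_sq (s := (Finset.univ : Finset (Fin n))) (f := v)
      simpa [dotProduct, sq, hs, Finset.mul_sum] using this
    have hvx : (v ⬝ᵥ v) / (n + 1) ≤ x ⬝ᵥ x := by
      rw [hxx, div_le_iff₀ hnpos]
      have hexp : (v ⬝ᵥ v - s * s / (↑n + 1)) * (↑n + 1) = (↑n + 1) * (v ⬝ᵥ v) - s * s := by
        field_simp
      rw [hexp]; linarith
    calc (lam2 / (n + 1)) * (v ⬝ᵥ v) = lam2 * ((v ⬝ᵥ v) / (n+1)) := by ring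
      _ ≤ lam2 * (x ⬝ᵥ x) := by exact mul_le_mul_of_nonneg_left hvx hlam2
      _ ≤ x ⬝ᵥ (L *ᵥ x) := hquadx
      _ = v ⬝ᵥ (M *ᵥ v) := by rw [hLx, hxLy, hyLy]
  refine ⟨key, ?_⟩
  intro r hr
  rw [spectrum.mem_iff] at hr
  have hdet : (r • (1 : Matrix (Fin n) (Fin n) ℝ) - M).det = 0 := by
    by_contra h
    exact hr (by simpa [Matrix.isUnit_iff_isUnit_det, Algebra.algebraMap_eq_smul_one]
      using isUnit_iff_ne_zero.mpr h)
  obtain ⟨v, hv0, hv⟩ := Matrix.exists_mulVec_eq_zero_iff.mpr hdet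
  have hMv : M *ᵥ v = r • v := by
    have := hv
    rw [sub_mulVec, smul_mulVec, one_mulVec, sub_eq_zero] at this
    exact this.symm
  have hvv : 0 < v ⬝ᵥ v := by
    have h0 : 0 ≤ v ⬝ᵥ v := by
      simp only [dotProduct]
      exact Finset.sum_nonneg fun i _ => mul_self_nonneg (v i)
    rcases h0.lt_or_eq with h | h
    · exact h
    · exact absurd ((dotProduct_self_eq_zero).mp h.symm) hv0
  have := key v
  rw [hMv, dotProduct_smul] at this
  have : lam2 / (n + 1) ≤ r := by
    have h' : (lam2 / (n + 1)) * (v ⬝ᵥ v) ≤ r * (v ⬝ᵥ v) := by simpa [smul_eq_mul] using this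
    exact le_of_mul_le_mul_right h' hvv
  exact this
end
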